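/- Suppose a configuration satisfies: Tree Initially; d(u) ≤ d̄_u for every node u; Root Child (for every i ∈ ℛ, d̄_i ≥ 1 and d_i(i) ≥ 1); Diversity Degree (d̄_u ≠ 1 for every non-root node u); for every j ∈ ℛ, both endpoints of every edge of E_j belong to V_j; and Shower Head: there is an integer c ≥ 1 such that for every i ∈ ℛ there are at least M nodes u with L_i(u) = c. If no Jump, no LeafSwap, and no MixSwap is applicable at any tuple, then for every i ∈ ℛ and every u ∈ V_i, L_i(u) ≤ log₂(N + 1) + c. -/

import Mathlib

namespace P2P

/-- A walk of length `n` from `r` to `u` in the edge set `E`. -/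
def Walk {α : Type*} (E : Finset (α × α)) (r u : α) (n : ℕ) : Prop :=
  ∃ f : ℕ → α, f 0 = r ∧ f n = u ∧ ∀ k < n, (f k, f (k + 1)) ∈ E

/-- Depth of `u` below root `r`: minimal number of edges of a directed walk
(equivalently, of a directed path) from `r` to `u`; `⊤` if unreachable. -/
noncomputable def depth {α : Type*} (E : Finset (α × α)) (r u : α) : ℕ∞ :=
  sInf {n : ℕ∞ | ∃ m : ℕ, n = (m : ℕ∞) ∧ Walk E r u m}

/-- Out-degree of `u` in `E`. -/
def outDeg {α : Type*} [DecidableEq α] (E : Finset (α × α)) (u : α) : ℕ :=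
  (E.filter fun e => e.1 = u).card

/-- In-degree of `u` in `E`. -/
def inDeg {α : Type*} [DecidableEq α] (E : Finset (α × α)) (u : α) : ℕ :=
  (E.filter fun e => e.2 = u).card

/-- A configuration assigns to each color an edge set. -/
abbrev Cfg := ℕ → Finset (ℕ × ℕ)

/-- The node set `V = {1, …, N}`. -/
def V (N : ℕ) : Finset ℕ := Finset.Icc 1 N

/-- The root set `ℛ = {1, …, M}`. -/
def R (M : ℕ) : Finset ℕ := Finset.Icc 1 M

/-- `u` has an incoming `i`-edge (root `i` counts its server link). -/
def HasIn (E : Cfg) (i u : ℕ) : Prop := (∃ w, (w, u) ∈ E i) ∨ u = i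

/-- Incoming count of `u`: incoming edges of all colors, plus 1 if `u` is a root. -/
def incCount (M : ℕ) (E : Cfg) (u : ℕ) : ℕ :=
  (∑ i ∈ R M, inDeg (E i) u) + (if u ∈ R M then 1 else 0)

/-- Total out-degree `d(u)`. -/
def dtot (M : ℕ) (E : Cfg) (u : ℕ) : ℕ := ∑ i ∈ R M, outDeg (E i) u

/-- Edges are ordered pairs of distinct nodes of `V`. -/
def ValidEdges (N M : ℕ) (E : Cfg) : Prop :=
  ∀ i ∈ R M, ∀ e ∈ E i, e.1 ∈ V N ∧ e.2 ∈ V N ∧ e.1 ≠ e.2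

/-- Assumption (Tree Initially). -/
def TreeInit (N M K : ℕ) (E : Cfg) : Prop :=
  (∀ u ∈ V N, incCount M E u ≤ K) ∧
  (∀ i ∈ R M, ∀ u ∈ V N, inDeg (E i) u ≤ 1) ∧
  (∀ i ∈ R M, inDeg (E i) i = 0)

/-- A node is available if it has spare capacity and some incoming edge. -/
def Available (M : ℕ) (E : Cfg) (dbar : ℕ → ℕ) (v : ℕ) : Prop :=
  dtot M E v < dbar v ∧ ∃ i ∈ R M, HasIn E i v

/-- An Add is applicable at `(u_p, u, i)`. -/
def AddApp (N M K : ℕ) (E : Cfg) (dbar : ℕ → ℕ) (up u i : ℕ) : Prop :=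
  i ∈ R M ∧ up ∈ V N ∧ u ∈ V N ∧
  incCount M E u < K ∧ ¬ HasIn E i u ∧ HasIn E i up ∧ dtot M E up < dbar up

/-- An Insert is applicable at `(u_p, u, i)` with `i`-child `u_c` of `u_p`. -/
def InsertApp (N M K : ℕ) (E : Cfg) (up u uc i : ℕ) : Prop :=
  i ∈ R M ∧ up ∈ V N ∧ u ∈ V N ∧
  incCount M E u < K ∧ ¬ HasIn E i u ∧ HasIn E i up ∧ (up, uc) ∈ E i

/-- A Jump is applicable at `(u, v, i)`. -/
def JumpApp (M : ℕ) (E : Cfg) (dbar : ℕ → ℕ) (u v i : ℕ) : Prop :=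
  i ∈ R M ∧ (∃ up, (up, u) ∈ E i) ∧ Available M E dbar v ∧ HasIn E i v ∧
  depth (E i) i v + 1 < depth (E i) i u

/-- A LeafSwap is applicable at `(u, v, i)`. -/
def LeafSwapApp (M : ℕ) (E : Cfg) (u v i : ℕ) : Prop :=
  i ∈ R M ∧ (∃ up, (up, u) ∈ E i) ∧ (∃ vp, (vp, v) ∈ E i) ∧
  outDeg (E i) v = 0 ∧ 0 < outDeg (E i) u ∧
  depth (E i) i v < depth (E i) i u

/-- A MixSwap is applicable at `(u, u_c, v, v_c, i, j)`. -/
def MixSwapApp (M : ℕ) (E : Cfg) (u uc v vc i j : ℕ) : Prop :=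
  i ∈ R M ∧ j ∈ R M ∧ i ≠ j ∧ u ≠ v ∧
  (u, uc) ∈ E i ∧ (v, vc) ∈ E j ∧ uc ≠ v ∧ vc ≠ u ∧
  depth (E i) i v ≤ depth (E i) i u ∧ depth (E j) j u ≤ depth (E j) j v ∧
  ((depth (E i) i u, depth (E j) j u) ≠ (depth (E i) i v, depth (E j) j v) ∨
    ((u : ℤ) - (v : ℤ)) * ((j : ℤ) - (i : ℤ)) > 0)

/-- Result of performing an Add. -/
def doAdd (E : Cfg) (up u i : ℕ) : Cfg :=
  fun l => if l = i then insert (up, u) (E l) else E l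

/-- Result of performing an Insert. -/
def doInsert (E : Cfg) (up u uc i : ℕ) : Cfg :=
  fun l => if l = i then insert (up, u) (insert (u, uc) ((E l).erase (up, uc))) else E l

/-- Result of performing a Jump (parent `u_p` is replaced by `v`). -/
def doJump (E : Cfg) (up u v i : ℕ) : Cfg :=
  fun l => if l = i then insert (v, u) ((E l).erase (up, u)) else E l

/-- Result of performing a LeafSwap (`u` and `v` exchange parents). -/
def doLeafSwap (E : Cfg) (up u vp v i : ℕ) : Cfg :=
  fun l => if l = i then
    insert (up, v) (insert (vp, u) (((E l).erase (up, u)).erase (vp, v))) else E l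

/-- Result of performing a MixSwap (`u` and `v` exchange the children `u_c`, `v_c`). -/
def doMixSwap (E : Cfg) (u uc v vc i j : ℕ) : Cfg :=
  fun l => if l = i then insert (v, uc) ((E l).erase (u, uc))
    else if l = j then insert (u, vc) ((E l).erase (v, vc)) else E l

/-- One step of the algorithm: perform any applicable Add, Insert, Jump,
LeafSwap or MixSwap. -/
def Step (N M K : ℕ) (dbar : ℕ → ℕ) (E E' : Cfg) : Prop :=
  (∃ up u i, AddApp N M K E dbar up u i ∧ E' = doAdd E up u i) ∨
  (∃ up u uc i, InsertApp N M K E up u uc i ∧ E' = doInsert E up u uc i) ∨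
  (∃ up u v i, (up, u) ∈ E i ∧ JumpApp M E dbar u v i ∧ E' = doJump E up u v i) ∨
  (∃ up u vp v i, (up, u) ∈ E i ∧ (vp, v) ∈ E i ∧ LeafSwapApp M E u v i ∧
      E' = doLeafSwap E up u vp v i) ∨
  (∃ u uc v vc i j, MixSwapApp M E u uc v vc i j ∧ E' = doMixSwap E u uc v vc i j)

/-- Total number of edges `|E|`. -/
def numE (M : ℕ) (E : Cfg) : ℕ := ∑ i ∈ R M, (E i).card

/-- `Y = Σ_u Σ_i min(L_i(u), N)`. -/
noncomputable def Yval (N M : ℕ) (E : Cfg) : ℕ :=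
  ∑ u ∈ V N, ∑ i ∈ R M, (min (depth (E i) i u) (N : ℕ∞)).toNat

/-- `S = Σ_u u · Σ_i i · d_i(u)`. -/
def Sval (N M : ℕ) (E : Cfg) : ℕ :=
  ∑ u ∈ V N, u * ∑ i ∈ R M, i * outDeg (E i) u



set_option linter.unusedSectionVars false

section auxWalk
variable {α : Type*} [DecidableEq α] {E : Finset (α × α)} {r u v p w : α} {m n d : ℕ}

lemma walk_zero : Walk E r r 0 := ⟨fun _ => r, rfl, rfl, by simp⟩

lemma walk_concat (h : Walk E r u m) (he : (u, v) ∈ E) : Walk E r v (m + 1) := by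
  obtain ⟨f, h0, hm, hstep⟩ := h
  refine ⟨fun k => if k = m + 1 then v else f k, by simp [h0], by simp, ?_⟩
  intro k hk
  rcases Nat.lt_or_ge k m with hkm | hkm
  · have h1 : k ≠ m + 1 := by omega
    have h2 : k + 1 ≠ m + 1 := by omega
    simp only [h1, h2, if_false]
    exact hstep k hkm
  · have hk' : k = m := by omega
    subst hk'
    have h1 : k ≠ k + 1 := by omega
    simp [h1, hm, he]

lemma walk_prefix (f : ℕ → α) (h0 : f 0 = r) (hstep : ∀ k < n, (f k, f (k + 1)) ∈ E)
    (hm : m ≤ n) : Walk E r (f m) m :=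
  ⟨f, h0, rfl, fun k hk => hstep k (lt_of_lt_of_le hk hm)⟩

lemma depth_le_of_walk (h : Walk E r u m) : depth E r u ≤ (m : ℕ∞) :=
  sInf_le ⟨m, rfl, h⟩

lemma depth_root : depth E r r = (0 : ℕ∞) :=
  le_antisymm (by simpa using depth_le_of_walk (walk_zero (E := E) (r := r))) zero_le

lemma depth_spec (h : depth E r u = (n : ℕ∞)) :
    Walk E r u n ∧ ∀ m < n, ¬ Walk E r u m := by
  classical
  have hne : ∃ m : ℕ, Walk E r u m := by
    by_contra hcon
    push_neg at hcon
    have : {x : ℕ∞ | ∃ m : ℕ, x = (m : ℕ∞) ∧ Walk E r u m} = ∅ := by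
      ext x; simp only [Set.mem_setOf_eq, Set.mem_empty_iff_false, iff_false]
      rintro ⟨m, rfl, hw⟩; exact hcon m hw
    rw [depth, this, sInf_empty] at h
    exact (ENat.coe_ne_top n) h.symm
  have hfind : depth E r u = ((Nat.find hne : ℕ) : ℕ∞) := by
    apply le_antisymm
    · exact depth_le_of_walk (Nat.find_spec hne)
    · apply le_sInf
      rintro x ⟨m, rfl, hw⟩
      exact_mod_cast Nat.find_min' hne hw
  rw [h] at hfind
  have hn : n = Nat.find hne := by exact_mod_cast hfind
  constructor
  · rw [hn]; exact Nat.find_spec hne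
  · intro m hm hw
    exact Nat.find_min hne (by omega : m < Nat.find hne) hw

lemma depth_exists_of_le (h : depth E r u ≤ (d : ℕ∞)) : ∃ m ≤ d, depth E r u = (m : ℕ∞) := by
  have : depth E r u ≠ ⊤ := fun ht => by rw [ht] at h; simp at h
  obtain ⟨m, hm⟩ := WithTop.ne_top_iff_exists.mp this
  refine ⟨m, ?_, hm.symm⟩
  rw [← hm] at h
  exact Nat.cast_le.mp h

lemma inDeg_pos (he : (p, w) ∈ E) : 0 < inDeg E w := by
  rw [inDeg, Finset.card_pos]
  exact ⟨(p, w), Finset.mem_filter.mpr ⟨he, rfl⟩⟩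

lemma outDeg_pos (he : (u, v) ∈ E) : 0 < outDeg E u := by
  rw [outDeg, Finset.card_pos]
  exact ⟨(u, v), Finset.mem_filter.mpr ⟨he, rfl⟩⟩

lemma exists_edge_of_outDeg (h : 0 < outDeg E u) : ∃ v, (u, v) ∈ E := by
  rw [outDeg, Finset.card_pos] at h
  obtain ⟨e, he⟩ := h
  rw [Finset.mem_filter] at he
  exact ⟨e.2, by rw [← he.2]; exact he.1⟩

/-- Every node at depth `d+1` has a parent at depth `d`. -/
lemma exists_parent (h : depth E r u = ((d + 1 : ℕ) : ℕ∞)) :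
    ∃ p, (p, u) ∈ E ∧ depth E r p = (d : ℕ∞) := by
  obtain ⟨⟨f, h0, hend, hstep⟩, hmin⟩ := depth_spec h
  have hpd : depth E r (f d) ≤ (d : ℕ∞) :=
    depth_le_of_walk (walk_prefix f h0 hstep (Nat.le_succ d))
  obtain ⟨m, hmd, hm⟩ := depth_exists_of_le hpd
  have hedge : (f d, u) ∈ E := by
    have := hstep d (Nat.lt_succ_self d)
    rwa [hend] at this
  refine ⟨f d, hedge, ?_⟩
  rcases Nat.lt_or_ge m d with hlt | hge
  · exfalso
    obtain ⟨hw, _⟩ := depth_spec hm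
    exact hmin (m + 1) (by omega) (walk_concat hw hedge)
  · rw [hm]; congr 1; omega

/-- A child of a node at depth `d` has depth `d+1`, when in-degrees
are at most one and the child is not the root. -/
lemma depth_child (h : depth E r p = (d : ℕ∞)) (he : (p, w) ∈ E)
    (hw1 : inDeg E w ≤ 1) (hwr : w ≠ r) : depth E r w = ((d + 1 : ℕ) : ℕ∞) := by
  obtain ⟨hwlk, _⟩ := depth_spec h
  have hle : depth E r w ≤ ((d + 1 : ℕ) : ℕ∞) := depth_le_of_walk (walk_concat hwlk he)
  obtain ⟨m, hmd, hm⟩ := depth_exists_of_le hle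
  obtain ⟨⟨f, h0, hendf, hstep⟩, _⟩ := depth_spec hm
  rcases Nat.eq_zero_or_pos m with hm0 | hmpos
  · exfalso; apply hwr; rw [← hendf, hm0, h0]
  · have hedge2 : (f (m - 1), w) ∈ E := by
      have := hstep (m - 1) (by omega)
      rwa [show m - 1 + 1 = m by omega, hendf] at this
    have hpeq : f (m - 1) = p := by
      by_contra hne
      have hsub : {(f (m-1), w), (p, w)} ⊆ E.filter (fun e => e.2 = w) := by
        intro e he'
        simp only [Finset.mem_insert, Finset.mem_singleton] at he'
        rcases he' with rfl | rfl
        · exact Finset.mem_filter.mpr ⟨hedge2, rfl⟩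
        · exact Finset.mem_filter.mpr ⟨he, rfl⟩
      have h2 : 2 ≤ inDeg E w := by
        rw [inDeg]
        calc 2 = ({(f (m-1), w), (p, w)} : Finset (α × α)).card := by
              rw [Finset.card_insert_of_notMem (by simp [hne]), Finset.card_singleton]
          _ ≤ _ := Finset.card_le_card hsub
      omega
    have hdle : depth E r p ≤ ((m - 1 : ℕ) : ℕ∞) := by
      rw [← hpeq]
      exact depth_le_of_walk (walk_prefix f h0 hstep (by omega))
    rw [h] at hdle
    have hdm : d ≤ m - 1 := by exact Nat.cast_le.mp hdle
    rw [hm]; congr 1; omega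

end auxWalk

open Classical in
/-- The set of nodes at depth exactly `d` below `r`. -/
noncomputable def level (E : Finset (ℕ × ℕ)) (r N d : ℕ) : Finset ℕ :=
  (V N).filter (fun u => depth E r u = (d : ℕ∞))

lemma mem_level {E : Finset (ℕ × ℕ)} {r N d u : ℕ} :
    u ∈ level E r N d ↔ u ∈ V N ∧ depth E r u = (d : ℕ∞) := by
  simp [level]

lemma level_disjoint {E : Finset (ℕ × ℕ)} {r N : ℕ} {d d' : ℕ} (h : d ≠ d') :
    Disjoint (level E r N d) (level E r N d') := by
  rw [Finset.disjoint_left]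
  intro u hu hu'
  rw [mem_level] at hu hu'
  exact h (by exact_mod_cast hu.2 ▸ hu'.2)

lemma sum_outDeg_le_card_level {E : Finset (ℕ × ℕ)} {r N d : ℕ}
    (hin : ∀ w ∈ V N, inDeg E w ≤ 1) (hroot : inDeg E r = 0)
    (hval : ∀ e ∈ E, e.1 ∈ V N ∧ e.2 ∈ V N ∧ e.1 ≠ e.2) :
    ∑ u ∈ level E r N d, outDeg E u ≤ (level E r N (d + 1)).card := by
  classical
  set s : Finset (ℕ × ℕ) := E.filter (fun e => e.1 ∈ level E r N d) with hs
  have hcard : ∑ u ∈ level E r N d, outDeg E u = s.card := by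
    rw [Finset.card_eq_sum_card_fiberwise
      (s := s) (f := Prod.fst) (t := level E r N d)
      (fun e he => (Finset.mem_filter.mp he).2)]
    apply Finset.sum_congr rfl
    intro u hu
    rw [outDeg]
    congr 1
    ext e
    simp only [Finset.mem_filter, hs]
    constructor
    · rintro ⟨he, h1⟩
      exact ⟨⟨he, h1 ▸ hu⟩, h1⟩
    · rintro ⟨⟨he, _⟩, h1⟩
      exact ⟨he, h1⟩
  rw [hcard]
  apply Finset.card_le_card_of_injOn (fun e => e.2)
  · rintro ⟨a, b⟩ he
    simp only [Finset.mem_coe, hs, Finset.mem_filter] at he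
    obtain ⟨heE, hlev⟩ := he
    simp only [Finset.mem_coe, mem_level] at hlev ⊢
    refine ⟨(hval _ heE).2.1, ?_⟩
    have hwr : b ≠ r := by
      intro hh
      have := inDeg_pos heE
      rw [hh, hroot] at this
      omega
    exact depth_child hlev.2 heE (hin b (hval _ heE).2.1) hwr
  · intro e he e' he' heq
    rw [Finset.mem_coe, hs, Finset.mem_filter] at he he'
    simp only at heq
    by_contra hne
    have hsub : {e, e'} ⊆ E.filter (fun x => x.2 = e.2) := by
      intro x hx
      simp only [Finset.mem_insert, Finset.mem_singleton] at hx
      rcases hx with rfl | rfl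
      · exact Finset.mem_filter.mpr ⟨he.1, rfl⟩
      · exact Finset.mem_filter.mpr ⟨he'.1, heq.symm⟩
    have h2 : 2 ≤ inDeg E e.2 := by
      rw [inDeg]
      calc 2 = ({e, e'} : Finset (ℕ × ℕ)).card := by
            rw [Finset.card_insert_of_notMem (by simp [hne]), Finset.card_singleton]
        _ ≤ _ := Finset.card_le_card hsub
    have := hin e.2 (hval e he.1).2.1
    omega

lemma geom_sum_two (t : ℕ) : ∑ k ∈ Finset.range t, 2 ^ k + 1 = 2 ^ t := by
  induction t with
  | zero => simp
  | succ t ih =>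
    rw [Finset.sum_range_succ]
    omega

/-- under Tree Initially, capacity, Root Child, Diversity Degree,
edges inside the trees, and the Shower-head assumption with parameter `c`, if no
Jump, LeafSwap or MixSwap is applicable anywhere then every tree has depth at
most `log₂(N+1) + c`. -/
theorem tree_depth_bound
    (N M K : ℕ) (hK : 0 < K) (hKM : K ≤ M) (hMN : M ≤ N)
    (E : Cfg) (dbar : ℕ → ℕ)
    (hvalid : ValidEdges N M E) (htree : TreeInit N M K E)
    (hcap : ∀ u ∈ V N, dtot M E u ≤ dbar u)
    (hroot : ∀ i ∈ R M, 1 ≤ dbar i ∧ 1 ≤ outDeg (E i) i)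
    (hdiv : ∀ u ∈ V N, u ∉ R M → dbar u ≠ 1)
    (hend : ∀ j ∈ R M, ∀ e ∈ E j, depth (E j) j e.1 ≠ ⊤ ∧ depth (E j) j e.2 ≠ ⊤)
    (c : ℕ) (hc : 1 ≤ c)
    (hshower : ∀ i ∈ R M,
      M ≤ {u : ℕ | u ∈ V N ∧ depth (E i) i u = (c : ℕ∞)}.ncard)
    (hnomove : ∀ u v i : ℕ, ¬ JumpApp M E dbar u v i ∧ ¬ LeafSwapApp M E u v i)
    (hnomix : ∀ u uc v vc i j : ℕ, ¬ MixSwapApp M E u uc v vc i j) :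
    ∀ i ∈ R M, ∀ u ∈ V N, ∀ n : ℕ, depth (E i) i u = (n : ℕ∞) →
      (n : ℝ) ≤ Real.logb 2 (N + 1) + c := by
  intro i hi u0 hu0 n hdep
  have hM1 : 1 ≤ M := le_trans hK hKM
  have hlogpos : (0:ℝ) ≤ Real.logb 2 (N + 1) := by
    apply Real.logb_nonneg (by norm_num)
    have : (0:ℝ) ≤ (N:ℝ) := Nat.cast_nonneg N
    linarith
  rcases le_or_gt n c with hnc | hnc
  · have : (n:ℝ) ≤ (c:ℝ) := by exact_mod_cast hnc
    linarith
  -- main case : c < n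
  obtain ⟨htreeK, htreeIn, htreeRoot⟩ := htree
  have hval' : ∀ e ∈ E i, e.1 ∈ V N ∧ e.2 ∈ V N ∧ e.1 ≠ e.2 := hvalid i hi
  have hin' : ∀ w ∈ V N, inDeg (E i) w ≤ 1 := htreeIn i hi
  have hrooti : inDeg (E i) i = 0 := htreeRoot i hi
  have hn2 : 2 ≤ n := by omega
  -- witness at depth n-1 with an edge into u0
  obtain ⟨w, hwedge, hwdepth⟩ := exists_parent
    (show depth (E i) i u0 = ((n - 1 + 1 : ℕ) : ℕ∞) by rw [hdep]; congr 1; omega)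
  -- every node at depth d with 1 ≤ d, d+2 ≤ n has an i-child (else LeafSwap applies)
  have hint : ∀ d u, 1 ≤ d → d + 2 ≤ n → u ∈ level (E i) i N d → 0 < outDeg (E i) u := by
    intro d u hd1 hdn hu
    by_contra h0
    have h0' : outDeg (E i) u = 0 := by omega
    rw [mem_level] at hu
    obtain ⟨up, hupe, _⟩ := exists_parent
      (show depth (E i) i u = ((d - 1 + 1 : ℕ) : ℕ∞) by rw [hu.2]; congr 1; omega)
    obtain ⟨wp, hwpe, _⟩ := exists_parent
      (show depth (E i) i w = ((n - 2 + 1 : ℕ) : ℕ∞) by rw [hwdepth]; congr 1; omega)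
    apply (hnomove w u i).2
    refine ⟨hi, ⟨wp, hwpe⟩, ⟨up, hupe⟩, h0', outDeg_pos hwedge, ?_⟩
    rw [hu.2, hwdepth]
    exact_mod_cast (show d < n - 1 by omega)
  -- every such node has total degree ≥ 2
  have hdeg2 : ∀ d u, 1 ≤ d → d + 2 ≤ n → u ∈ level (E i) i N d → 2 ≤ dtot M E u := by
    intro d u hd1 hdn hu
    have hiout : 0 < outDeg (E i) u := hint d u hd1 hdn hu
    rw [mem_level] at hu
    obtain ⟨up, hupe, _⟩ := exists_parent
      (show depth (E i) i u = ((d - 1 + 1 : ℕ) : ℕ∞) by rw [hu.2]; congr 1; omega)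
    by_cases hR : u ∈ R M
    · have hui : u ≠ i := by
        intro h
        rw [h, depth_root] at hu
        have : (0:ℕ) = d := by exact_mod_cast hu.2
        omega
      have h1 : 1 ≤ outDeg (E u) u := (hroot u hR).2
      have hsub : ({i, u} : Finset ℕ) ⊆ R M := by
        intro x hx
        simp only [Finset.mem_insert, Finset.mem_singleton] at hx
        rcases hx with rfl | rfl
        · exact hi
        · exact hR
      calc 2 ≤ outDeg (E i) u + outDeg (E u) u := by omega
        _ = ∑ j ∈ ({i, u} : Finset ℕ), outDeg (E j) u := by
            rw [Finset.sum_pair (Ne.symm hui)]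
        _ ≤ dtot M E u := Finset.sum_le_sum_of_subset hsub
    · -- non-root: u is full since no Jump is applicable at (u0, u, i)
      have hnj := (hnomove u0 u i).1
      have hfull : ¬ (dtot M E u < dbar u) := by
        intro hav
        apply hnj
        refine ⟨hi, ⟨w, hwedge⟩, ⟨hav, ⟨i, hi, Or.inl ⟨up, hupe⟩⟩⟩, Or.inl ⟨up, hupe⟩, ?_⟩
        rw [hu.2, hdep]
        calc (d:ℕ∞) + 1 = ((d + 1 : ℕ) : ℕ∞) := by push_cast; ring
          _ < (n:ℕ∞) := by exact_mod_cast (show d + 1 < n by omega)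
      have h1 := hcap u hu.1
      have h2 := hdiv u hu.1 hR
      have hle : outDeg (E i) u ≤ dtot M E u :=
        Finset.single_le_sum (f := fun j => outDeg (E j) u) (fun _ _ => Nat.zero_le _) hi
      omega
  -- MixSwap-freeness: two distinct nodes at the same depth of tree i cannot
  -- both have an out-edge of the same other color j
  have hkey : ∀ d, 1 ≤ d → d + 2 ≤ n → ∀ j, j ∈ R M → j ≠ i →
      ∀ u v, u ∈ level (E i) i N d → v ∈ level (E i) i N d → u ≠ v →
      0 < outDeg (E j) u → 0 < outDeg (E j) v → False := by
    intro d hd1 hdn j hjR hji u v hu hv huv hju hjv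
    obtain ⟨ucj, hucj⟩ := exists_edge_of_outDeg hju
    obtain ⟨vcj, hvcj⟩ := exists_edge_of_outDeg hjv
    obtain ⟨du, hdu⟩ := WithTop.ne_top_iff_exists.mp (hend j hjR _ hucj).1
    obtain ⟨dv, hdv⟩ := WithTop.ne_top_iff_exists.mp (hend j hjR _ hvcj).1
    obtain ⟨uci, huci⟩ := exists_edge_of_outDeg (hint d u hd1 hdn hu)
    obtain ⟨vci, hvci⟩ := exists_edge_of_outDeg (hint d v hd1 hdn hv)
    have horient : ∀ a b ac bc : ℕ, a ∈ level (E i) i N d → b ∈ level (E i) i N d →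
        a ≠ b → (a, ac) ∈ E i → (b, bc) ∈ E j →
        ∀ da db : ℕ, depth (E j) j a = (da : ℕ∞) → depth (E j) j b = (db : ℕ∞) →
        da ≤ db → (da ≠ db ∨ ((a:ℤ) - (b:ℤ)) * ((j:ℤ) - (i:ℤ)) > 0) → False := by
      intro a b ac bc ha hb hab hac hbc da db hda hdb hdadb htie
      apply hnomix a ac b bc i j
      rw [mem_level] at ha hb
      have hacne : ac ≠ b := by
        have hiac : ac ≠ i := by
          intro h
          have := inDeg_pos hac
          rw [h, hrooti] at this
          omega
        have hdac : depth (E i) i ac = ((d + 1 : ℕ) : ℕ∞) :=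
          depth_child ha.2 hac (hin' ac (hval' _ hac).2.1) hiac
        intro h
        rw [h, hb.2] at hdac
        have : d = d + 1 := by exact_mod_cast hdac
        omega
      have hbcne : bc ≠ a := by
        have hjbc : bc ≠ j := by
          intro h
          have := inDeg_pos hbc
          rw [h, htreeRoot j hjR] at this
          omega
        have hdbc : depth (E j) j bc = ((db + 1 : ℕ) : ℕ∞) :=
          depth_child hdb hbc (htreeIn j hjR bc ((hvalid j hjR) _ hbc).2.1) hjbc
        intro h
        rw [h, hda] at hdbc
        have : da = db + 1 := by exact_mod_cast hdbc
        omega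
      refine ⟨hi, hjR, (Ne.symm hji), hab, hac, hbc, hacne, hbcne, ?_, ?_, ?_⟩
      · rw [ha.2, hb.2]
      · rw [hda, hdb]
        exact_mod_cast hdadb
      · rcases htie with hne | hpos
        · left
          intro hpair
          apply hne
          have h2 := congrArg Prod.snd hpair
          simp only at h2
          rw [hda, hdb] at h2
          exact_mod_cast h2
        · right
          exact hpos
    rcases lt_trichotomy du dv with h | h | h
    · exact horient u v uci vcj hu hv huv huci hvcj du dv hdu.symm hdv.symm
        (le_of_lt h) (Or.inl (ne_of_lt h))
    · -- tie-break on identities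
      have hne1 : ((u:ℤ) - (v:ℤ)) ≠ 0 := by
        intro hh
        apply huv
        have : (u:ℤ) = (v:ℤ) := by omega
        exact_mod_cast this
      have hne2 : ((j:ℤ) - (i:ℤ)) ≠ 0 := by
        intro hh
        apply hji
        have : (j:ℤ) = (i:ℤ) := by omega
        exact_mod_cast this
      rcases lt_trichotomy (((u:ℤ) - (v:ℤ)) * ((j:ℤ) - (i:ℤ))) 0 with hs | hs | hs
      · refine horient v u vci ucj hv hu (Ne.symm huv) hvci hucj dv du hdv.symm hdu.symm
          (le_of_eq h.symm) (Or.inr ?_)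
        nlinarith
      · exfalso
        rcases mul_eq_zero.mp hs with h1 | h1
        · exact hne1 h1
        · exact hne2 h1
      · exact horient u v uci vcj hu hv huv huci hvcj du dv hdu.symm hdv.symm
          (le_of_eq h) (Or.inr hs)
    · exact horient v u vci ucj hv hu (Ne.symm huv) hvci hucj dv du hdv.symm hdu.symm
        (le_of_lt h) (Or.inl (ne_of_lt h))
  -- hence at most M-1 nodes per level have i-out-degree < 2
  have hbad : ∀ d, 1 ≤ d → d + 2 ≤ n →
      ((level (E i) i N d).filter (fun u => outDeg (E i) u < 2)).card ≤ M - 1 := by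
    intro d hd1 hdn
    classical
    have hchoice : ∀ u : ℕ, ∃ j, u ∈ (level (E i) i N d).filter (fun u => outDeg (E i) u < 2) →
        (j ∈ (R M).erase i ∧ 0 < outDeg (E j) u) := by
      intro u
      by_cases hu : u ∈ (level (E i) i N d).filter (fun u => outDeg (E i) u < 2)
      swap
      · exact ⟨0, fun h => absurd h hu⟩
      rw [Finset.mem_filter] at hu
      have h2 : 2 ≤ dtot M E u := hdeg2 d u hd1 hdn hu.1
      have hiout : 0 < outDeg (E i) u := hint d u hd1 hdn hu.1
      have hsplit : outDeg (E i) u + ∑ j ∈ (R M).erase i, outDeg (E j) u = dtot M E u :=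
        Finset.add_sum_erase (R M) (fun j => outDeg (E j) u) hi
      have hpos : 0 < ∑ j ∈ (R M).erase i, outDeg (E j) u := by omega
      obtain ⟨j, hj, hjpos⟩ := Finset.exists_ne_zero_of_sum_ne_zero (by omega :
        ∑ j ∈ (R M).erase i, outDeg (E j) u ≠ 0)
      exact ⟨j, fun _ => ⟨hj, Nat.pos_of_ne_zero hjpos⟩⟩
    choose φ hφ using hchoice
    have hmcard : ((R M).erase i).card = M - 1 := by
      rw [Finset.card_erase_of_mem hi]
      simp [R, Nat.card_Icc]
    rw [← hmcard]
    apply Finset.card_le_card_of_injOn φ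
    · intro u hu
      exact (hφ u hu).1
    · intro u hu v hv huv
      rw [Finset.mem_coe] at hu hv
      by_contra hne
      have hju := (hφ u hu).2
      have hjv := (hφ v hv).2
      rw [huv] at hju
      obtain ⟨hji, hjR⟩ := Finset.mem_erase.mp (hφ v hv).1
      exact hkey d hd1 hdn (φ v) hjR hji u v
        (Finset.mem_filter.mp hu).1 (Finset.mem_filter.mp hv).1 hne hju hjv
  -- the level-size recurrence
  have hrec : ∀ d, 1 ≤ d → d + 2 ≤ n →
      2 * (level (E i) i N d).card ≤ (level (E i) i N (d + 1)).card + (M - 1) := by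
    intro d hd1 hdn
    classical
    have hsum : ∑ u ∈ level (E i) i N d, outDeg (E i) u ≤ (level (E i) i N (d + 1)).card :=
      sum_outDeg_le_card_level hin' hrooti hval'
    set B := (level (E i) i N d).filter (fun u => outDeg (E i) u < 2) with hB
    set G := (level (E i) i N d).filter (fun u => ¬ outDeg (E i) u < 2) with hG
    have hsplit : ∑ u ∈ B, outDeg (E i) u + ∑ u ∈ G, outDeg (E i) u
        = ∑ u ∈ level (E i) i N d, outDeg (E i) u :=
      Finset.sum_filter_add_sum_filter_not _ _ _
    have hBle : B.card * 1 ≤ ∑ u ∈ B, outDeg (E i) u := by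
      rw [← Finset.sum_const_nat (m := 1) (fun x _ => rfl)]
      apply Finset.sum_le_sum
      intro x hx
      rw [hB, Finset.mem_filter] at hx
      exact hint d x hd1 hdn hx.1
    have hGle : G.card * 2 ≤ ∑ u ∈ G, outDeg (E i) u := by
      rw [← Finset.sum_const_nat (m := 2) (fun x _ => rfl)]
      apply Finset.sum_le_sum
      intro x hx
      rw [hG, Finset.mem_filter] at hx
      omega
    have hcards : B.card + G.card = (level (E i) i N d).card := by
      rw [hB, hG]
      exact Finset.card_filter_add_card_filter_not _
    have hBbound := hbad d hd1 hdn
    rw [← hB] at hBbound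
    omega
  -- base: level c has at least M nodes
  have hbase : M ≤ (level (E i) i N c).card := by
    have hshow := hshower i hi
    have hset : {u : ℕ | u ∈ V N ∧ depth (E i) i u = (c : ℕ∞)}
        = ↑(level (E i) i N c) := by
      ext u
      simp [mem_level]
    rw [hset, Set.ncard_coe_finset] at hshow
    exact hshow
  -- induction : levels grow geometrically
  have hind : ∀ k, c + k + 1 ≤ n → 2 ^ k + (M - 1) ≤ (level (E i) i N (c + k)).card := by
    intro k
    induction k with
    | zero =>
      intro _
      simpa using (by omega : 2 ^ 0 + (M - 1) ≤ M).trans hbase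
    | succ k ih =>
      intro hkn
      have ih' := ih (by omega)
      have hr := hrec (c + k) (by omega) (by omega)
      have : c + (k + 1) = (c + k) + 1 := by omega
      rw [this]
      have h2 : 2 ^ (k + 1) = 2 * 2 ^ k := by ring
      omega
  -- summing the level sizes
  have hsumN : ∑ k ∈ Finset.range (n - c), (level (E i) i N (c + k)).card ≤ N := by
    classical
    rw [← Finset.card_biUnion]
    · calc ((Finset.range (n - c)).biUnion (fun k => level (E i) i N (c + k))).card
          ≤ (V N).card := by
            apply Finset.card_le_card
            intro u hu
            rw [Finset.mem_biUnion] at hu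
            obtain ⟨k, _, hk⟩ := hu
            exact (mem_level.mp hk).1
        _ = N := by simp [V]
    · intro x _ y _ hxy
      exact level_disjoint (by omega)
  have hgeom : 2 ^ (n - c) ≤ N + 1 := by
    have h1 : ∑ k ∈ Finset.range (n - c), 2 ^ k
        ≤ ∑ k ∈ Finset.range (n - c), (level (E i) i N (c + k)).card := by
      apply Finset.sum_le_sum
      intro k hk
      rw [Finset.mem_range] at hk
      have := hind k (by omega)
      omega
    have h2 := geom_sum_two (n - c)
    omega
  -- conclude with logarithms
  have hreal : (2:ℝ) ^ (n - c) ≤ (N:ℝ) + 1 := by exact_mod_cast hgeom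
  have hlog : ((n - c : ℕ) : ℝ) ≤ Real.logb 2 ((N:ℝ) + 1) := by
    have hpow : Real.logb 2 ((2:ℝ) ^ (n - c)) = ((n - c : ℕ) : ℝ) := by
      rw [Real.logb_pow]
      simp
    rw [← hpow]
    apply Real.logb_le_logb_of_le (by norm_num) (by positivity) hreal
  have hcast : ((n - c : ℕ) : ℝ) = (n:ℝ) - (c:ℝ) := by
    push_cast [Nat.cast_sub (le_of_lt hnc)]
    ring
  rw [hcast] at hlog
  have : Real.logb 2 ((N:ℝ) + 1) = Real.logb 2 ((N:ℕ) + 1) := by norm_num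
  linarith

end P2P
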